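/- For all real x₁, x₂, the integral over ρ ∈ (-1,1) of (1/2)·(2π√(1-ρ²))⁻¹·exp(-(x₁²+x₂²-2ρx₁x₂)/(2(1-ρ²))) dρ equals (1/2)·(1-Φ(max(|x₁|,|x₂|))), where Φ is the standard normal CDF. -/

import Mathlib

open Real MeasureTheory Set Filter

lemma gauss_total : ∫ v : ℝ, rexp (-v ^ 2 / 2) = Real.sqrt (2 * π) := by
  have h : ∀ v : ℝ, rexp (-v ^ 2 / 2) = rexp (-(1/2 : ℝ) * v ^ 2) := by
    intro v; ring_nf
  simp_rw [h, integral_gaussian]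
  rw [show π / (1/2:ℝ) = 2 * π by ring]

lemma gauss_integrable : Integrable (fun v : ℝ => rexp (-v ^ 2 / 2)) := by
  have h : ∀ v : ℝ, rexp (-v ^ 2 / 2) = rexp (-(1/2 : ℝ) * v ^ 2) := by
    intro v; ring_nf
  simp_rw [h]
  exact integrable_exp_neg_mul_sq (by norm_num)

lemma gauss_Ioi0 : ∫ w in Ioi (0:ℝ), rexp (-w ^ 2 / 2) = Real.sqrt (2 * π) / 2 := by
  have h : ∀ v : ℝ, rexp (-v ^ 2 / 2) = rexp (-(1/2 : ℝ) * v ^ 2) := by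
    intro v; ring_nf
  simp_rw [h, integral_gaussian_Ioi]
  rw [show π / (1/2:ℝ) = 2 * π by ring]

lemma t_exp_deriv (t : ℝ) : HasDerivAt (fun t : ℝ => -rexp (-t ^ 2 / 2))
    (t * rexp (-t ^ 2 / 2)) t := by
  have h1 : HasDerivAt (fun t : ℝ => -t ^ 2 / 2) (-t) t := by
    have h := ((hasDerivAt_pow 2 t).neg).div_const 2
    refine h.congr_deriv ?_
    push_cast; ring
  have h2 := (h1.exp).neg
  refine h2.congr_deriv ?_
  ring

lemma t_exp_tendsto : Tendsto (fun t : ℝ => -rexp (-t ^ 2 / 2)) atTop (nhds 0) := by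
  have h2 : Tendsto (fun t : ℝ => -t ^ 2 / 2) atTop atBot := by
    have hp : Tendsto (fun t : ℝ => t ^ 2 / 2) atTop atTop :=
      (tendsto_pow_atTop (two_ne_zero)).atTop_div_const (by norm_num)
    have := Filter.tendsto_neg_atBot_iff.mpr hp
    simpa [neg_div] using this
  have h3 := (Real.tendsto_exp_atBot.comp h2).neg
  simpa using h3

lemma int_t_exp_integrable (s : ℝ) (hs : 0 ≤ s) :
    IntegrableOn (fun t : ℝ => t * rexp (-t ^ 2 / 2)) (Ioi s) := by
  exact integrableOn_Ioi_deriv_of_nonneg' (fun x _ => t_exp_deriv x)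
    (fun x hx => mul_nonneg (le_of_lt (lt_of_le_of_lt hs hx)) (le_of_lt (exp_pos _)))
    t_exp_tendsto

lemma int_t_exp (s : ℝ) (hs : 0 ≤ s) :
    ∫ t in Ioi s, t * rexp (-t ^ 2 / 2) = rexp (-s ^ 2 / 2) := by
  have h := integral_Ioi_of_hasDerivAt_of_nonneg' (fun x _ => t_exp_deriv x)
    (fun x hx => mul_nonneg (le_of_lt (lt_of_le_of_lt hs hx)) (le_of_lt (exp_pos _)))
    t_exp_tendsto
  rw [h]; ring

lemma sin_image_Ioo (p q : ℝ) (hp : -1 ≤ p) (hq : q ≤ 1) (hpq : p ≤ q) :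
    Real.sin '' Ioo (arcsin p) (arcsin q) = Ioo p q := by
  have hp1 : p ≤ 1 := le_trans hpq hq
  have hq1 : -1 ≤ q := le_trans hp hpq
  ext y
  constructor
  · rintro ⟨θ, ⟨h1, h2⟩, rfl⟩
    have hθ : θ ∈ Icc (-(π/2)) (π/2) :=
      ⟨le_of_lt (lt_of_le_of_lt (neg_pi_div_two_le_arcsin p) h1),
       le_of_lt (lt_of_lt_of_le h2 (arcsin_le_pi_div_two q))⟩
    constructor
    · have := Real.strictMonoOn_sin (arcsin_mem_Icc p) hθ h1
      rwa [Real.sin_arcsin hp hp1] at this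
    · have := Real.strictMonoOn_sin hθ (arcsin_mem_Icc q) h2
      rwa [Real.sin_arcsin hq1 hq] at this
  · intro hy
    refine ⟨arcsin y, ⟨?_, ?_⟩, Real.sin_arcsin (le_trans hp hy.1.le) (le_trans hy.2.le hq)⟩
    · exact Real.strictMonoOn_arcsin ⟨hp, hp1⟩
        ⟨le_trans hp hy.1.le, le_trans hy.2.le hq⟩ hy.1
    · exact Real.strictMonoOn_arcsin ⟨le_trans hp hy.1.le, le_trans hy.2.le hq⟩
        ⟨hq1, hq⟩ hy.2

lemma arcsin_measure (p q : ℝ) (hp : -1 ≤ p) (hq : q ≤ 1) (hpq : p ≤ q) :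
    (∫ ρ in Ioo p q, (Real.sqrt (1 - ρ ^ 2))⁻¹ = arcsin q - arcsin p) ∧
    IntegrableOn (fun ρ : ℝ => (Real.sqrt (1 - ρ ^ 2))⁻¹) (Ioo p q) := by
  have himg := sin_image_Ioo p q hp hq hpq
  have hmeas : MeasurableSet (Ioo (arcsin p) (arcsin q)) := measurableSet_Ioo
  have hderiv : ∀ θ ∈ Ioo (arcsin p) (arcsin q),
      HasDerivWithinAt Real.sin (Real.cos θ) (Ioo (arcsin p) (arcsin q)) θ :=
    fun θ _ => (Real.hasDerivAt_sin θ).hasDerivWithinAt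
  have hinj : InjOn Real.sin (Ioo (arcsin p) (arcsin q)) := by
    apply Real.injOn_sin.mono
    intro θ hθ
    exact ⟨le_of_lt (lt_of_le_of_lt (neg_pi_div_two_le_arcsin p) hθ.1),
      le_of_lt (lt_of_lt_of_le hθ.2 (arcsin_le_pi_div_two q))⟩
  have hsimp : ∀ θ ∈ Ioo (arcsin p) (arcsin q),
      |Real.cos θ| • (Real.sqrt (1 - Real.sin θ ^ 2))⁻¹ = 1 := by
    intro θ hθ
    have hθ2 : θ ∈ Ioo (-(π/2)) (π/2) :=
      ⟨lt_of_le_of_lt (neg_pi_div_two_le_arcsin p) hθ.1,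
       lt_of_lt_of_le hθ.2 (arcsin_le_pi_div_two q)⟩
    have hcos : 0 < Real.cos θ := Real.cos_pos_of_mem_Ioo hθ2
    have h1 : 1 - Real.sin θ ^ 2 = Real.cos θ ^ 2 := by
      have := Real.sin_sq_add_cos_sq θ; linarith
    rw [h1, Real.sqrt_sq hcos.le, abs_of_pos hcos, smul_eq_mul,
      mul_inv_cancel₀ hcos.ne']
  have key := integral_image_eq_integral_abs_deriv_smul hmeas hderiv hinj
    (fun ρ : ℝ => (Real.sqrt (1 - ρ ^ 2))⁻¹)
  rw [himg] at key
  have hE : ∫ θ in Ioo (arcsin p) (arcsin q),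
      |Real.cos θ| • (Real.sqrt (1 - Real.sin θ ^ 2))⁻¹ = arcsin q - arcsin p := by
    rw [setIntegral_congr_fun measurableSet_Ioo hsimp]
    simp [Real.volume_Ioo, ENNReal.toReal_ofReal,
      sub_nonneg.mpr (Real.monotone_arcsin hpq)]
  constructor
  · rw [key, hE]
  · rw [← himg]
    rw [integrableOn_image_iff_integrableOn_abs_deriv_smul hmeas hderiv hinj]
    exact (integrableOn_const measure_Ioo_lt_top.ne).congr_fun
      (fun θ hθ => (hsimp θ hθ).symm) measurableSet_Ioo

lemma arccos_int (a t : ℝ) (ha : 0 ≤ a) (hat : a < t) :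
    (∫ v in Ioo a t, (Real.sqrt (t ^ 2 - v ^ 2))⁻¹ = arccos (a / t)) ∧
    IntegrableOn (fun v : ℝ => (Real.sqrt (t ^ 2 - v ^ 2))⁻¹) (Ioo a t) := by
  have ht : 0 < t := lt_of_le_of_lt ha hat
  have hat1 : a / t < 1 := (div_lt_one ht).mpr hat
  have hat0 : 0 ≤ a / t := div_nonneg ha ht.le
  set s : Set ℝ := Ioo (arcsin (a/t)) (π/2) with hs
  have hmeas : MeasurableSet s := measurableSet_Ioo
  have hsub : ∀ ψ ∈ s, ψ ∈ Ioo (-(π/2)) (π/2) := by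
    intro ψ hψ
    refine ⟨lt_of_lt_of_le ?_ (le_of_lt (lt_of_le_of_lt (Real.arcsin_nonneg.mpr hat0) hψ.1)), hψ.2⟩
    simpa using pi_div_two_pos
  have hderiv : ∀ ψ ∈ s, HasDerivWithinAt (fun ψ => t * Real.sin ψ) (t * Real.cos ψ) s ψ :=
    fun ψ _ => ((Real.hasDerivAt_sin ψ).const_mul t).hasDerivWithinAt
  have hinj : InjOn (fun ψ => t * Real.sin ψ) s := by
    intro ψ₁ h1 ψ₂ h2 h
    have : Real.sin ψ₁ = Real.sin ψ₂ := mul_left_cancel₀ ht.ne' h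
    exact Real.injOn_sin (Ioo_subset_Icc_self (hsub ψ₁ h1)) (Ioo_subset_Icc_self (hsub ψ₂ h2)) this
  have himg : (fun ψ => t * Real.sin ψ) '' s = Ioo a t := by
    have h1 : (fun ψ => t * Real.sin ψ) '' s = (fun y => t * y) '' (Real.sin '' s) := by
      rw [Set.image_image]
    rw [h1, hs, ← Real.arcsin_one, sin_image_Ioo (a/t) 1 (le_trans (by norm_num) hat0) le_rfl hat1.le]
    rw [image_mul_left_Ioo ht]
    rw [mul_div_cancel₀ _ ht.ne', mul_one]
  have hsimp : ∀ ψ ∈ s, |t * Real.cos ψ| • (Real.sqrt (t ^ 2 - (t * Real.sin ψ) ^ 2))⁻¹ = 1 := by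
    intro ψ hψ
    have hcos : 0 < Real.cos ψ := Real.cos_pos_of_mem_Ioo (hsub ψ hψ)
    have h1 : t ^ 2 - (t * Real.sin ψ) ^ 2 = (t * Real.cos ψ) ^ 2 := by
      have := Real.sin_sq_add_cos_sq ψ; nlinarith
    have htc : 0 < t * Real.cos ψ := mul_pos ht hcos
    rw [h1, Real.sqrt_sq htc.le, abs_of_pos htc, smul_eq_mul, mul_inv_cancel₀ htc.ne']
  have key := integral_image_eq_integral_abs_deriv_smul hmeas hderiv hinj
    (fun v : ℝ => (Real.sqrt (t ^ 2 - v ^ 2))⁻¹)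
  rw [himg] at key
  constructor
  · rw [key, setIntegral_congr_fun hmeas hsimp]
    have hlen : arcsin (a/t) ≤ π/2 := arcsin_le_pi_div_two _
    simp [hs, Real.volume_Ioo, ENNReal.toReal_ofReal, sub_nonneg.mpr hlen,
      Real.arccos_eq_pi_div_two_sub_arcsin]
  · rw [← himg, integrableOn_image_iff_integrableOn_abs_deriv_smul hmeas hderiv hinj]
    exact (integrableOn_const measure_Ioo_lt_top.ne).congr_fun
      (fun ψ hψ => (hsimp ψ hψ).symm) hmeas

lemma sqrtshift (v : ℝ) (hv : 0 < v) :
    (∫ t in Ioi v, t * (Real.sqrt (t ^ 2 - v ^ 2))⁻¹ * rexp (-t ^ 2 / 2)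
      = Real.sqrt (2 * π) / 2 * rexp (-v ^ 2 / 2)) ∧
    IntegrableOn (fun t : ℝ => t * (Real.sqrt (t ^ 2 - v ^ 2))⁻¹ * rexp (-t ^ 2 / 2)) (Ioi v) := by
  set f : ℝ → ℝ := fun w => Real.sqrt (w ^ 2 + v ^ 2) with hf
  set f' : ℝ → ℝ := fun w => w / Real.sqrt (w ^ 2 + v ^ 2) with hf'
  have hD : ∀ w : ℝ, (0:ℝ) < w ^ 2 + v ^ 2 := fun w => by positivity
  have hmeas : MeasurableSet (Ioi (0:ℝ)) := measurableSet_Ioi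
  have hderiv : ∀ w ∈ Ioi (0:ℝ), HasDerivWithinAt f (f' w) (Ioi 0) w := by
    intro w _
    have h1 : HasDerivAt (fun w : ℝ => w ^ 2 + v ^ 2) (2 * w) w := by
      have := (hasDerivAt_pow 2 w).add_const (v ^ 2)
      refine this.congr_deriv ?_; push_cast; ring
    have h2 := (Real.hasDerivAt_sqrt (hD w).ne').comp w h1
    apply HasDerivAt.hasDerivWithinAt
    refine h2.congr_deriv ?_
    simp only [hf']
    field_simp
  have hinj : InjOn f (Ioi (0:ℝ)) := by
    intro w₁ h1 w₂ h2 h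
    have e1 : w₁ ^ 2 + v ^ 2 = w₂ ^ 2 + v ^ 2 := by
      have := congrArg (fun x => x ^ 2) h
      simpa [hf, Real.sq_sqrt (hD w₁).le, Real.sq_sqrt (hD w₂).le] using this
    have : w₁ ^ 2 = w₂ ^ 2 := by linarith
    nlinarith [mem_Ioi.mp h1, mem_Ioi.mp h2]
  have himg : f '' Ioi 0 = Ioi v := by
    ext y
    constructor
    · rintro ⟨w, hw, rfl⟩
      have : v ^ 2 < w ^ 2 + v ^ 2 := by nlinarith [mem_Ioi.mp hw]
      have := Real.sqrt_lt_sqrt (by positivity) this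
      rwa [Real.sqrt_sq hv.le] at this
    · intro hy
      have hyv : v < y := hy
      have hy0 : 0 < y := lt_trans hv hyv
      refine ⟨Real.sqrt (y ^ 2 - v ^ 2), ?_, ?_⟩
      · exact mem_Ioi.mpr (Real.sqrt_pos.mpr (by nlinarith))
      · show Real.sqrt (Real.sqrt (y ^ 2 - v ^ 2) ^ 2 + v ^ 2) = y
        rw [Real.sq_sqrt (by nlinarith : (0:ℝ) ≤ y ^ 2 - v ^ 2)]
        rw [show y ^ 2 - v ^ 2 + v ^ 2 = y ^ 2 by ring, Real.sqrt_sq hy0.le]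
  have hsimp : ∀ w ∈ Ioi (0:ℝ), |f' w| • (f w * (Real.sqrt ((f w) ^ 2 - v ^ 2))⁻¹
      * rexp (-(f w) ^ 2 / 2)) = rexp (-v ^ 2 / 2) * rexp (-w ^ 2 / 2) := by
    intro w hw
    have hw0 : 0 < w := hw
    have hfw2 : (f w) ^ 2 = w ^ 2 + v ^ 2 := Real.sq_sqrt (hD w).le
    have hfw0 : 0 < f w := Real.sqrt_pos.mpr (hD w)
    have habs : |f' w| = w / f w := by
      rw [hf']
      exact abs_of_pos (div_pos hw0 hfw0)
    rw [habs, smul_eq_mul, hfw2]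
    rw [show w ^ 2 + v ^ 2 - v ^ 2 = w ^ 2 by ring, Real.sqrt_sq hw0.le]
    rw [← Real.exp_add]
    field_simp
    ring_nf
  have key := integral_image_eq_integral_abs_deriv_smul hmeas hderiv hinj
    (fun t : ℝ => t * (Real.sqrt (t ^ 2 - v ^ 2))⁻¹ * rexp (-t ^ 2 / 2))
  rw [himg] at key
  have hgauss : ∫ w in Ioi (0:ℝ), rexp (-v ^ 2 / 2) * rexp (-w ^ 2 / 2)
      = Real.sqrt (2 * π) / 2 * rexp (-v ^ 2 / 2) := by
    rw [MeasureTheory.integral_const_mul]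
    have h : ∀ w : ℝ, rexp (-w ^ 2 / 2) = rexp (-(1/2 : ℝ) * w ^ 2) := fun w => by ring_nf
    simp_rw [h, integral_gaussian_Ioi]
    rw [show π / (1/2:ℝ) = 2 * π by ring]
    ring
  constructor
  · rw [key, setIntegral_congr_fun hmeas hsimp, hgauss]
  · rw [← himg, integrableOn_image_iff_integrableOn_abs_deriv_smul hmeas hderiv hinj]
    have hint : IntegrableOn (fun w : ℝ => rexp (-v ^ 2 / 2) * rexp (-w ^ 2 / 2)) (Ioi 0) := by
      have h : ∀ w : ℝ, rexp (-w ^ 2 / 2) = rexp (-(1/2 : ℝ) * w ^ 2) := fun w => by ring_nf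
      simp_rw [h]
      exact ((integrable_exp_neg_mul_sq (by norm_num)).const_mul _).integrableOn
    exact hint.congr_fun (fun w hw => (hsimp w hw).symm) hmeas

set_option maxHeartbeats 1000000 in
lemma key_rho (x₁ x₂ t : ℝ) (ht : 0 < t) :
    (∫ ρ in {ρ : ℝ | x₁ ^ 2 + x₂ ^ 2 - 2 * ρ * x₁ * x₂ < t ^ 2 * (1 - ρ ^ 2)} ∩ Ioo (-1 : ℝ) 1,
        (Real.sqrt (1 - ρ ^ 2))⁻¹ = 2 * arccos (max |x₁| |x₂| / t)) ∧
    IntegrableOn (fun ρ : ℝ => (Real.sqrt (1 - ρ ^ 2))⁻¹)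
      ({ρ : ℝ | x₁ ^ 2 + x₂ ^ 2 - 2 * ρ * x₁ * x₂ < t ^ 2 * (1 - ρ ^ 2)} ∩ Ioo (-1 : ℝ) 1) := by
  set a := max |x₁| |x₂| with hadef
  have ha0 : 0 ≤ a := le_trans (abs_nonneg x₁) (le_max_left _ _)
  have hsq : a ^ 2 = x₁ ^ 2 ∨ a ^ 2 = x₂ ^ 2 := by
    rcases max_choice |x₁| |x₂| with h | h
    · left; rw [hadef, h, sq_abs]
    · right; rw [hadef, h, sq_abs]
  have hx1a : x₁ ^ 2 ≤ a ^ 2 := by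
    have : |x₁| ≤ a := le_max_left _ _
    nlinarith [abs_nonneg x₁, sq_abs x₁]
  have hx2a : x₂ ^ 2 ≤ a ^ 2 := by
    have : |x₂| ≤ a := le_max_right _ _
    nlinarith [abs_nonneg x₂, sq_abs x₂]
  have hc2 : (x₁ * x₂) ^ 2 = a ^ 2 * (x₁ ^ 2 + x₂ ^ 2 - a ^ 2) := by
    rcases hsq with h | h <;> rw [h] <;> ring
  have habs' : |x₁ * x₂| ≤ a ^ 2 := by
    rw [abs_mul]
    calc |x₁| * |x₂| ≤ a * a :=
          mul_le_mul (le_max_left _ _) (le_max_right _ _) (abs_nonneg _) ha0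
      _ = a ^ 2 := by ring
  clear_value a
  rcases le_or_gt t a with hta | hat
  · -- empty set case
    have hempty : {ρ : ℝ | x₁ ^ 2 + x₂ ^ 2 - 2 * ρ * x₁ * x₂ < t ^ 2 * (1 - ρ ^ 2)}
        ∩ Ioo (-1 : ℝ) 1 = ∅ := by
      ext ρ
      simp only [mem_inter_iff, mem_setOf_eq, mem_Ioo, mem_empty_iff_false, iff_false, not_and]
      intro hlt h1 h2
      have hρ2 : ρ ^ 2 < 1 := by nlinarith
      have hkey : a ^ 2 * (1 - ρ ^ 2) ≤ x₁ ^ 2 + x₂ ^ 2 - 2 * ρ * x₁ * x₂ := by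
        rcases hsq with h | h
        · rw [h]; nlinarith [sq_nonneg (x₂ - ρ * x₁)]
        · rw [h]; nlinarith [sq_nonneg (x₁ - ρ * x₂)]
      have hta2 : t ^ 2 ≤ a ^ 2 := by nlinarith
      nlinarith [mul_le_mul_of_nonneg_right hta2 (by linarith : (0:ℝ) ≤ 1 - ρ ^ 2)]
    rw [hempty]
    refine ⟨?_, integrableOn_empty⟩
    rw [Real.arccos_of_one_le ((one_le_div ht).mpr hta)]
    simp
  · -- main case a < t
    rcases eq_or_lt_of_le ha0 with ha | ha
    · -- a = 0, so x₁ = x₂ = 0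
      have hx1 : x₁ = 0 := by
        have := le_max_left |x₁| |x₂|; rw [← hadef, ← ha] at this
        exact abs_eq_zero.mp (le_antisymm this (abs_nonneg _))
      have hx2 : x₂ = 0 := by
        have := le_max_right |x₁| |x₂|; rw [← hadef, ← ha] at this
        exact abs_eq_zero.mp (le_antisymm this (abs_nonneg _))
      have hset : {ρ : ℝ | x₁ ^ 2 + x₂ ^ 2 - 2 * ρ * x₁ * x₂ < t ^ 2 * (1 - ρ ^ 2)}
          ∩ Ioo (-1 : ℝ) 1 = Ioo (-1 : ℝ) 1 := by
        apply inter_eq_self_of_subset_right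
        intro ρ hρ
        simp only [mem_setOf_eq, hx1, hx2]
        have : ρ ^ 2 < 1 := by
          rcases hρ with ⟨h1, h2⟩; nlinarith
        nlinarith [sq_nonneg t, pow_pos ht 2]
      rw [hset]
      have harc := arcsin_measure (-1) 1 le_rfl le_rfl (by norm_num)
      refine ⟨?_, harc.2⟩
      rw [harc.1, ← ha]
      simp [Real.arcsin_one, Real.arcsin_neg_one, Real.arccos_eq_pi_div_two_sub_arcsin,
        zero_div, Real.arcsin_zero]
      ring
    · -- 0 < a < t
      have hat' : a / t < 1 := (div_lt_one ht).mpr hat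
      have hat0 : 0 ≤ a / t := div_nonneg ha0 ht.le
      have habs := habs'
      have hb_le : x₁ * x₂ / (a * t) ≤ 1 := by
        rw [div_le_one (by positivity)]
        calc x₁ * x₂ ≤ |x₁ * x₂| := le_abs_self _
          _ ≤ a ^ 2 := habs
          _ ≤ a * t := by nlinarith
      have hb_ge : -1 ≤ x₁ * x₂ / (a * t) := by
        rw [le_div_iff₀ (by positivity)]
        have : -(a ^ 2) ≤ x₁ * x₂ := neg_le_of_abs_le habs
        nlinarith
      set α := arccos (a / t) with hα
      set β := arccos (x₁ * x₂ / (a * t)) with hβ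
      have ca : Real.cos α = a / t := Real.cos_arccos (le_trans (by norm_num) hat0) hat'.le
      have cb : Real.cos β = x₁ * x₂ / (a * t) := Real.cos_arccos hb_ge hb_le
      have hα0 : 0 ≤ α := Real.arccos_nonneg _
      have hαπ : α ≤ π := Real.arccos_le_pi _
      have hβ0 : 0 ≤ β := Real.arccos_nonneg _
      have hβπ : β ≤ π := Real.arccos_le_pi _
      have hαβ : α ≤ β := by
        rw [hα, hβ, Real.arccos_eq_pi_div_two_sub_arcsin, Real.arccos_eq_pi_div_two_sub_arcsin]
        have h1 : x₁ * x₂ / (a * t) ≤ a / t := by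
          rw [div_le_div_iff₀ (by positivity) ht]
          calc x₁ * x₂ * t ≤ |x₁ * x₂| * t := by nlinarith [le_abs_self (x₁ * x₂)]
            _ ≤ a ^ 2 * t := by nlinarith [abs_nonneg (x₁ * x₂)]
            _ = a * (a * t) := by ring
        linarith [Real.monotone_arcsin h1]
      have hsum : β + α ≤ π := by
        have h1 : -(a / t) ≤ x₁ * x₂ / (a * t) := by
          rw [le_div_iff₀ (by positivity : (0:ℝ) < a * t)]
          have he : -(a / t) * (a * t) = -(a ^ 2) := by field_simp
          rw [he]
          exact neg_le_of_abs_le habs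
        have h2 : β ≤ arccos (-(a / t)) := by
          rw [hβ, Real.arccos_eq_pi_div_two_sub_arcsin, Real.arccos_eq_pi_div_two_sub_arcsin]
          linarith [Real.monotone_arcsin h1]
        rw [Real.arccos_neg, ← hα] at h2
        linarith
      set ρm := Real.cos (β + α) with hρm
      set ρp := Real.cos (β - α) with hρp
      have hmle : ρm ≤ ρp :=
        Real.cos_le_cos_of_nonneg_of_le_pi (by linarith) (by linarith) (by linarith)
      have hm1 : -1 ≤ ρm := Real.neg_one_le_cos _
      have hp1 : ρp ≤ 1 := Real.cos_le_one _
      have hS : ρm + ρp = 2 * (x₁ * x₂) / t ^ 2 := by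
        have h1 : ρm + ρp = 2 * (Real.cos β * Real.cos α) := by
          rw [hρm, hρp, Real.cos_add, Real.cos_sub]; ring
        rw [h1, ca, cb]
        field_simp
      have hP : ρm * ρp = (x₁ ^ 2 + x₂ ^ 2 - t ^ 2) / t ^ 2 := by
        have h1 : ρm * ρp = Real.cos α ^ 2 + Real.cos β ^ 2 - 1 := by
          rw [hρm, hρp, Real.cos_add, Real.cos_sub]
          have s1 := Real.sin_sq_add_cos_sq α
          have s2 := Real.sin_sq_add_cos_sq β
          linear_combination (-(Real.sin α ^ 2)) * s2 + (Real.cos β ^ 2 - 1) * s1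
        rw [h1, ca, cb]
        rw [div_pow, div_pow, hc2]
        field_simp
        ring
      have hap : arcsin ρp = π / 2 - (β - α) := by
        rw [hρp, ← Real.sin_pi_div_two_sub, Real.arcsin_sin (by linarith) (by linarith)]
      have ham : arcsin ρm = π / 2 - (β + α) := by
        rw [hρm, ← Real.sin_pi_div_two_sub, Real.arcsin_sin (by linarith) (by linarith)]
      clear_value ρm ρp
      clear hρm hρp
      have hfact : ∀ ρ : ℝ, t ^ 2 * (1 - ρ ^ 2) - (x₁ ^ 2 + x₂ ^ 2 - 2 * ρ * x₁ * x₂)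
          = -(t ^ 2 * ((ρ - ρm) * (ρ - ρp))) := by
        intro ρ
        have e1 : t ^ 2 * (ρm + ρp) = 2 * (x₁ * x₂) := by
          rw [hS]; field_simp
        have e2 : t ^ 2 * (ρm * ρp) = x₁ ^ 2 + x₂ ^ 2 - t ^ 2 := by
          rw [hP]; field_simp
        linear_combination (-ρ) * e1 + e2
      have hset : {ρ : ℝ | x₁ ^ 2 + x₂ ^ 2 - 2 * ρ * x₁ * x₂ < t ^ 2 * (1 - ρ ^ 2)}
          ∩ Ioo (-1 : ℝ) 1 = Ioo ρm ρp := by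
        ext ρ
        simp only [mem_inter_iff, mem_setOf_eq, mem_Ioo]
        have ht2 : (0:ℝ) < t ^ 2 := pow_pos ht 2
        constructor
        · rintro ⟨hlt, _, _⟩
          have h4 := hfact ρ
          have h5 : t ^ 2 * ((ρ - ρm) * (ρ - ρp)) < 0 := by linarith
          have h2 : (ρ - ρm) * (ρ - ρp) < 0 := by
            have h6 := div_neg_of_neg_of_pos h5 ht2
            rwa [mul_div_cancel_left₀ _ ht2.ne'] at h6
          constructor
          · by_contra hcon
            push_neg at hcon
            nlinarith [mul_nonneg (sub_nonneg.mpr hcon) (sub_nonneg.mpr (hcon.trans hmle))]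
          · by_contra hcon
            push_neg at hcon
            nlinarith [mul_nonneg (sub_nonneg.mpr (hmle.trans hcon)) (sub_nonneg.mpr hcon)]
        · rintro ⟨h1, h2⟩
          have h3 : (ρ - ρm) * (ρ - ρp) < 0 :=
            mul_neg_of_pos_of_neg (by linarith) (by linarith)
          refine ⟨?_, by linarith, by linarith⟩
          nlinarith [hfact ρ, mul_pos ht2 (neg_pos.mpr h3)]
      rw [hset]
      have harc := arcsin_measure ρm ρp hm1 hp1 hmle
      refine ⟨?_, harc.2⟩
      rw [harc.1]
      rw [hap, ham, hα]
      ring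

/-- The standard normal CDF. -/
noncomputable def stdNormalCDF (t : ℝ) : ℝ :=
  ∫ s in Set.Iic t, (Real.sqrt (2 * Real.pi))⁻¹ * Real.exp (-s ^ 2 / 2)

lemma cdf_fact (b : ℝ) :
    1 - stdNormalCDF b = (Real.sqrt (2 * π))⁻¹ * ∫ v in Ioi b, rexp (-v ^ 2 / 2) := by
  have hsplit : (∫ v in Iic b, rexp (-v ^ 2 / 2)) + (∫ v in Ioi b, rexp (-v ^ 2 / 2))
      = Real.sqrt (2 * π) := by
    rw [intervalIntegral.integral_Iic_add_Ioi gauss_integrable.integrableOn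
      gauss_integrable.integrableOn]
    exact gauss_total
  have hcdf : stdNormalCDF b = (Real.sqrt (2 * π))⁻¹ * ∫ v in Iic b, rexp (-v ^ 2 / 2) := by
    rw [stdNormalCDF, MeasureTheory.integral_const_mul]
  have hs : (0:ℝ) < Real.sqrt (2 * π) := Real.sqrt_pos.mpr (by positivity)
  set s := Real.sqrt (2 * π) with hsdef
  rw [hcdf]
  field_simp
  simp only [neg_div] at hsplit ⊢; linarith
-- step 4 : integrate over ρ for fixed t
lemma step4 (x₁ x₂ t : ℝ) (ht : 0 < t) :
    (∫⁻ ρ in Ioo (-1:ℝ) 1,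
      ({ρ : ℝ | x₁ ^ 2 + x₂ ^ 2 - 2 * ρ * x₁ * x₂ < t ^ 2 * (1 - ρ ^ 2)}.indicator
        (fun ρ => ENNReal.ofReal ((Real.sqrt (1 - ρ ^ 2))⁻¹ * (t * rexp (-t ^ 2 / 2)))) ρ))
    = ENNReal.ofReal (t * rexp (-t ^ 2 / 2) * (2 * arccos (max |x₁| |x₂| / t))) := by
  have hms : MeasurableSet {ρ : ℝ | x₁ ^ 2 + x₂ ^ 2 - 2 * ρ * x₁ * x₂ < t ^ 2 * (1 - ρ ^ 2)} := by
    apply measurableSet_lt <;> fun_prop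
  rw [lintegral_indicator hms, Measure.restrict_restrict hms]
  have hint : IntegrableOn (fun ρ : ℝ => (Real.sqrt (1 - ρ ^ 2))⁻¹ * (t * rexp (-t ^ 2 / 2)))
      ({ρ : ℝ | x₁ ^ 2 + x₂ ^ 2 - 2 * ρ * x₁ * x₂ < t ^ 2 * (1 - ρ ^ 2)} ∩ Ioo (-1 : ℝ) 1) :=
    (key_rho x₁ x₂ t ht).2.mul_const _
  have hnn : 0 ≤ᵐ[volume.restrict ({ρ : ℝ | x₁ ^ 2 + x₂ ^ 2 - 2 * ρ * x₁ * x₂ < t ^ 2 * (1 - ρ ^ 2)}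
      ∩ Ioo (-1 : ℝ) 1)] fun ρ : ℝ => (Real.sqrt (1 - ρ ^ 2))⁻¹ * (t * rexp (-t ^ 2 / 2)) :=
    Filter.Eventually.of_forall fun ρ => mul_nonneg (inv_nonneg.mpr (Real.sqrt_nonneg _))
      (mul_nonneg ht.le (Real.exp_pos _).le)
  rw [← ofReal_integral_eq_lintegral_ofReal hint hnn]
  congr 1
  rw [MeasureTheory.integral_mul_const, (key_rho x₁ x₂ t ht).1]
  ring

-- step 5 : unfold arccos into an integral over v , expressed as an indicator integral
lemma step5 (a t : ℝ) (ha0 : 0 ≤ a) (ht : 0 < t) :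
    ENNReal.ofReal (t * rexp (-t ^ 2 / 2) * (2 * arccos (a / t)))
    = ∫⁻ v in Ioi a, ((Iio t).indicator
        (fun v => ENNReal.ofReal (2 * (t * rexp (-t ^ 2 / 2))
          * (Real.sqrt (t ^ 2 - v ^ 2))⁻¹)) v) := by
  rw [lintegral_indicator measurableSet_Iio, Measure.restrict_restrict measurableSet_Iio,
    Set.Iio_inter_Ioi]
  rcases le_or_gt t a with hta | hat
  · rw [Ioo_eq_empty (by exact fun hh => absurd hh (not_lt.mpr hta)), Measure.restrict_empty,
      lintegral_zero_measure, Real.arccos_of_one_le ((one_le_div ht).mpr hta)]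
    simp
  · have hint : IntegrableOn (fun v : ℝ => 2 * (t * rexp (-t ^ 2 / 2))
        * (Real.sqrt (t ^ 2 - v ^ 2))⁻¹) (Ioo a t) :=
      (arccos_int a t ha0 hat).2.const_mul _
    have hnn : 0 ≤ᵐ[volume.restrict (Ioo a t)] fun v : ℝ => 2 * (t * rexp (-t ^ 2 / 2))
        * (Real.sqrt (t ^ 2 - v ^ 2))⁻¹ :=
      Filter.Eventually.of_forall fun v => mul_nonneg
        (mul_nonneg (by norm_num) (mul_nonneg ht.le (Real.exp_pos _).le))
        (inv_nonneg.mpr (Real.sqrt_nonneg _))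
    rw [← ofReal_integral_eq_lintegral_ofReal hint hnn]
    congr 1
    rw [MeasureTheory.integral_const_mul, (arccos_int a t ha0 hat).1]
    ring

-- step 7 : integrate over t for fixed v
lemma step7 (v : ℝ) (hv : 0 < v) :
    (∫⁻ t in Ioi (0:ℝ), ((Ioi v).indicator
        (fun t => ENNReal.ofReal (2 * (t * rexp (-t ^ 2 / 2))
          * (Real.sqrt (t ^ 2 - v ^ 2))⁻¹)) t))
    = ENNReal.ofReal (Real.sqrt (2 * π) * rexp (-v ^ 2 / 2)) := by
  rw [lintegral_indicator measurableSet_Ioi, Measure.restrict_restrict measurableSet_Ioi,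
    Set.Ioi_inter_Ioi, max_eq_left hv.le]
  have hint : IntegrableOn (fun t : ℝ => 2 * (t * rexp (-t ^ 2 / 2))
      * (Real.sqrt (t ^ 2 - v ^ 2))⁻¹) (Ioi v) := by
    have hbase : IntegrableOn
        (fun t : ℝ => 2 * (t * (Real.sqrt (t ^ 2 - v ^ 2))⁻¹ * rexp (-t ^ 2 / 2))) (Ioi v) :=
      (sqrtshift v hv).2.const_mul 2
    exact IntegrableOn.congr_fun hbase (fun t _ => by ring) measurableSet_Ioi
  have hnn : 0 ≤ᵐ[volume.restrict (Ioi v)] fun t : ℝ => 2 * (t * rexp (-t ^ 2 / 2))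
      * (Real.sqrt (t ^ 2 - v ^ 2))⁻¹ := by
    filter_upwards [ae_restrict_mem measurableSet_Ioi] with t htv
    have ht0 : 0 < t := lt_trans hv htv
    exact mul_nonneg (mul_nonneg (by norm_num) (mul_nonneg ht0.le (Real.exp_pos _).le))
      (inv_nonneg.mpr (Real.sqrt_nonneg _))
  rw [← ofReal_integral_eq_lintegral_ofReal hint hnn]
  congr 1
  have heq : EqOn (fun t : ℝ => 2 * (t * rexp (-t ^ 2 / 2)) * (Real.sqrt (t ^ 2 - v ^ 2))⁻¹)
      (fun t : ℝ => 2 * (t * (Real.sqrt (t ^ 2 - v ^ 2))⁻¹ * rexp (-t ^ 2 / 2))) (Ioi v) :=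
    fun t _ => by ring
  rw [setIntegral_congr_fun measurableSet_Ioi heq, MeasureTheory.integral_const_mul,
    (sqrtshift v hv).1]
  ring

set_option maxHeartbeats 1000000 in
lemma main_chain (x₁ x₂ : ℝ) :
    (∫⁻ ρ in Ioo (-1:ℝ) 1, ENNReal.ofReal ((Real.sqrt (1 - ρ ^ 2))⁻¹
        * rexp (-(x₁ ^ 2 + x₂ ^ 2 - 2 * ρ * x₁ * x₂) / (2 * (1 - ρ ^ 2)))))
    = ENNReal.ofReal (Real.sqrt (2 * π) * ∫ v in Ioi (max |x₁| |x₂|), rexp (-v ^ 2 / 2)) := by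
  set a := max |x₁| |x₂| with hadef
  have ha0 : 0 ≤ a := le_trans (abs_nonneg x₁) (le_max_left _ _)
  set S₁ : Set (ℝ × ℝ) :=
    {p : ℝ × ℝ | x₁ ^ 2 + x₂ ^ 2 - 2 * p.1 * x₁ * x₂ < p.2 ^ 2 * (1 - p.1 ^ 2)} with hS₁def
  set F : ℝ × ℝ → ENNReal := S₁.indicator
    (fun p => ENNReal.ofReal ((Real.sqrt (1 - p.1 ^ 2))⁻¹ * (p.2 * rexp (-p.2 ^ 2 / 2))))
    with hFdef
  have hS₁ : MeasurableSet S₁ := by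
    apply measurableSet_lt <;> fun_prop
  have hF : Measurable F := by
    apply Measurable.indicator _ hS₁
    apply Measurable.ennreal_ofReal
    fun_prop
  set S₂ : Set (ℝ × ℝ) := {p : ℝ × ℝ | p.2 < p.1} with hS₂def
  set G : ℝ × ℝ → ENNReal := S₂.indicator
    (fun p => ENNReal.ofReal (2 * (p.1 * rexp (-p.1 ^ 2 / 2))
      * (Real.sqrt (p.1 ^ 2 - p.2 ^ 2))⁻¹)) with hGdef
  have hS₂ : MeasurableSet S₂ := by
    apply measurableSet_lt <;> fun_prop
  have hG : Measurable G := by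
    apply Measurable.indicator _ hS₂
    apply Measurable.ennreal_ofReal
    fun_prop
  -- inner unfolding for fixed ρ
  have hinner : ∀ ρ ∈ Ioo (-1:ℝ) 1,
      ENNReal.ofReal ((Real.sqrt (1 - ρ ^ 2))⁻¹
        * rexp (-(x₁ ^ 2 + x₂ ^ 2 - 2 * ρ * x₁ * x₂) / (2 * (1 - ρ ^ 2))))
      = ∫⁻ t in Ioi (0:ℝ), F (ρ, t) := by
    intro ρ hρ
    have hρ1 : -1 < ρ := hρ.1
    have hρ2 : ρ < 1 := hρ.2
    have hu : 0 < 1 - ρ ^ 2 := by nlinarith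
    have hq0 : 0 ≤ x₁ ^ 2 + x₂ ^ 2 - 2 * ρ * x₁ * x₂ := by
      nlinarith [sq_nonneg (x₁ - ρ * x₂), mul_nonneg hu.le (sq_nonneg x₂)]
    set s₀ := Real.sqrt ((x₁ ^ 2 + x₂ ^ 2 - 2 * ρ * x₁ * x₂) / (1 - ρ ^ 2)) with hs₀def
    have hs₀ : 0 ≤ s₀ := Real.sqrt_nonneg _
    have hset : ∀ t ∈ Ioi (0:ℝ), F (ρ, t)
        = (Ioi s₀).indicator
          (fun t => ENNReal.ofReal ((Real.sqrt (1 - ρ ^ 2))⁻¹ * (t * rexp (-t ^ 2 / 2)))) t := by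
      intro t ht
      have ht0 : (0:ℝ) < t := ht
      have hiff : x₁ ^ 2 + x₂ ^ 2 - 2 * ρ * x₁ * x₂ < t ^ 2 * (1 - ρ ^ 2) ↔ s₀ < t := by
        rw [hs₀def, Real.sqrt_lt' ht0, div_lt_iff₀ hu]
      rw [hFdef]
      simp only [Set.indicator_apply, hS₁def, Set.mem_setOf_eq, Set.mem_Ioi]
      rw [if_congr hiff rfl rfl]
    rw [setLIntegral_congr_fun_ae measurableSet_Ioi (Filter.Eventually.of_forall hset)]
    rw [lintegral_indicator measurableSet_Ioi, Measure.restrict_restrict measurableSet_Ioi,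
      Set.Ioi_inter_Ioi, max_eq_left hs₀]
    have hint : IntegrableOn
        (fun t : ℝ => (Real.sqrt (1 - ρ ^ 2))⁻¹ * (t * rexp (-t ^ 2 / 2))) (Ioi s₀) :=
      (int_t_exp_integrable s₀ hs₀).const_mul _
    have hnn : 0 ≤ᵐ[volume.restrict (Ioi s₀)]
        fun t : ℝ => (Real.sqrt (1 - ρ ^ 2))⁻¹ * (t * rexp (-t ^ 2 / 2)) := by
      filter_upwards [ae_restrict_mem measurableSet_Ioi] with t htv
      have ht0 : 0 ≤ t := le_trans hs₀ (le_of_lt htv)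
      exact mul_nonneg (inv_nonneg.mpr (Real.sqrt_nonneg _))
        (mul_nonneg ht0 (Real.exp_pos _).le)
    rw [← ofReal_integral_eq_lintegral_ofReal hint hnn]
    congr 1
    rw [MeasureTheory.integral_const_mul, int_t_exp s₀ hs₀]
    have hexp : -(x₁ ^ 2 + x₂ ^ 2 - 2 * ρ * x₁ * x₂) / (2 * (1 - ρ ^ 2)) = -s₀ ^ 2 / 2 := by
      rw [hs₀def, Real.sq_sqrt (div_nonneg hq0 hu.le)]
      rw [neg_div, neg_div, div_div, mul_comm (1 - ρ ^ 2) 2]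
    rw [hexp]
  -- bridge for fixed t : F (·, t) as a 1-dim indicator
  have hbridge1 : ∀ t : ℝ, (fun ρ => F (ρ, t))
      = fun ρ => ({ρ : ℝ | x₁ ^ 2 + x₂ ^ 2 - 2 * ρ * x₁ * x₂ < t ^ 2 * (1 - ρ ^ 2)}.indicator
          (fun ρ => ENNReal.ofReal ((Real.sqrt (1 - ρ ^ 2))⁻¹ * (t * rexp (-t ^ 2 / 2)))) ρ) := by
    intro t
    funext ρ
    rw [hFdef]
    simp only [Set.indicator_apply, hS₁def, Set.mem_setOf_eq]
  have hbridge2 : ∀ t : ℝ, (fun v => G (t, v))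
      = fun v => ((Iio t).indicator
          (fun v => ENNReal.ofReal (2 * (t * rexp (-t ^ 2 / 2))
            * (Real.sqrt (t ^ 2 - v ^ 2))⁻¹)) v) := by
    intro t
    funext v
    rw [hGdef]
    simp only [Set.indicator_apply, hS₂def, Set.mem_setOf_eq, Set.mem_Iio]
  have hbridge3 : ∀ v : ℝ, (fun t => G (t, v))
      = fun t => ((Ioi v).indicator
          (fun t => ENNReal.ofReal (2 * (t * rexp (-t ^ 2 / 2))
            * (Real.sqrt (t ^ 2 - v ^ 2))⁻¹)) t) := by
    intro v
    funext t
    rw [hGdef]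
    simp only [Set.indicator_apply, hS₂def, Set.mem_setOf_eq, Set.mem_Ioi]
  calc
    (∫⁻ ρ in Ioo (-1:ℝ) 1, ENNReal.ofReal ((Real.sqrt (1 - ρ ^ 2))⁻¹
        * rexp (-(x₁ ^ 2 + x₂ ^ 2 - 2 * ρ * x₁ * x₂) / (2 * (1 - ρ ^ 2)))))
      = ∫⁻ ρ in Ioo (-1:ℝ) 1, ∫⁻ t in Ioi (0:ℝ), F (ρ, t) :=
        setLIntegral_congr_fun_ae measurableSet_Ioo (Filter.Eventually.of_forall hinner)
    _ = ∫⁻ t in Ioi (0:ℝ), ∫⁻ ρ in Ioo (-1:ℝ) 1, F (ρ, t) := by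
        apply lintegral_lintegral_swap
        exact hF.aemeasurable
    _ = ∫⁻ t in Ioi (0:ℝ), ENNReal.ofReal (t * rexp (-t ^ 2 / 2) * (2 * arccos (a / t))) := by
        apply setLIntegral_congr_fun_ae measurableSet_Ioi
        apply Filter.Eventually.of_forall
        intro t ht
        rw [hbridge1 t, step4 x₁ x₂ t ht, hadef]
    _ = ∫⁻ t in Ioi (0:ℝ), ∫⁻ v in Ioi a, G (t, v) := by
        apply setLIntegral_congr_fun_ae measurableSet_Ioi
        apply Filter.Eventually.of_forall
        intro t ht
        rw [hbridge2 t, ← step5 a t ha0 ht]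
    _ = ∫⁻ v in Ioi a, ∫⁻ t in Ioi (0:ℝ), G (t, v) := by
        apply lintegral_lintegral_swap
        exact hG.aemeasurable
    _ = ∫⁻ v in Ioi a, ENNReal.ofReal (Real.sqrt (2 * π) * rexp (-v ^ 2 / 2)) := by
        apply setLIntegral_congr_fun_ae measurableSet_Ioi
        apply Filter.Eventually.of_forall
        intro v hv
        have hv0 : 0 < v := lt_of_le_of_lt ha0 hv
        rw [hbridge3 v, step7 v hv0]
    _ = ENNReal.ofReal (Real.sqrt (2 * π) * ∫ v in Ioi a, rexp (-v ^ 2 / 2)) := by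
        have hint : IntegrableOn (fun v : ℝ => Real.sqrt (2 * π) * rexp (-v ^ 2 / 2)) (Ioi a) :=
          (gauss_integrable.const_mul _).integrableOn
        have hnn : 0 ≤ᵐ[volume.restrict (Ioi a)]
            fun v : ℝ => Real.sqrt (2 * π) * rexp (-v ^ 2 / 2) :=
          Filter.Eventually.of_forall fun v =>
            mul_nonneg (Real.sqrt_nonneg _) (Real.exp_pos _).le
        rw [← ofReal_integral_eq_lintegral_ofReal hint hnn, MeasureTheory.integral_const_mul]

set_option maxHeartbeats 1000000 in
theorem uniform_correlation_mixture (x₁ x₂ : ℝ) :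
    (∫ ρ in Set.Ioo (-1 : ℝ) 1,
      (1 / 2) * ((2 * Real.pi * Real.sqrt (1 - ρ ^ 2))⁻¹ *
        Real.exp (-(x₁ ^ 2 + x₂ ^ 2 - 2 * ρ * x₁ * x₂) / (2 * (1 - ρ ^ 2))))) =
    (1 / 2) * (1 - stdNormalCDF (max |x₁| |x₂|)) := by
  have ha0 : (0:ℝ) ≤ max |x₁| |x₂| := le_trans (abs_nonneg x₁) (le_max_left _ _)
  -- Step 0 : pull out the constant
  have step0 : (∫ ρ in Set.Ioo (-1 : ℝ) 1,
      (1 / 2) * ((2 * Real.pi * Real.sqrt (1 - ρ ^ 2))⁻¹ *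
        Real.exp (-(x₁ ^ 2 + x₂ ^ 2 - 2 * ρ * x₁ * x₂) / (2 * (1 - ρ ^ 2)))))
      = (4 * π)⁻¹ * ∫ ρ in Set.Ioo (-1 : ℝ) 1, (Real.sqrt (1 - ρ ^ 2))⁻¹
          * rexp (-(x₁ ^ 2 + x₂ ^ 2 - 2 * ρ * x₁ * x₂) / (2 * (1 - ρ ^ 2))) := by
    rw [← MeasureTheory.integral_const_mul]
    apply setIntegral_congr_fun measurableSet_Ioo
    intro ρ _
    have hπ : (π : ℝ) ≠ 0 := Real.pi_ne_zero
    field_simp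
    ring
  have hnn : 0 ≤ᵐ[volume.restrict (Ioo (-1:ℝ) 1)] fun ρ : ℝ => (Real.sqrt (1 - ρ ^ 2))⁻¹
      * rexp (-(x₁ ^ 2 + x₂ ^ 2 - 2 * ρ * x₁ * x₂) / (2 * (1 - ρ ^ 2))) :=
    Filter.Eventually.of_forall fun ρ =>
      mul_nonneg (inv_nonneg.mpr (Real.sqrt_nonneg _)) (Real.exp_pos _).le
  have hmeas : AEStronglyMeasurable (fun ρ : ℝ => (Real.sqrt (1 - ρ ^ 2))⁻¹
      * rexp (-(x₁ ^ 2 + x₂ ^ 2 - 2 * ρ * x₁ * x₂) / (2 * (1 - ρ ^ 2))))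
      (volume.restrict (Ioo (-1:ℝ) 1)) := by
    apply Measurable.aestronglyMeasurable
    fun_prop
  have hInn : (0:ℝ) ≤ ∫ v in Ioi (max |x₁| |x₂|), rexp (-v ^ 2 / 2) :=
    integral_nonneg fun v => (Real.exp_pos _).le
  have main : (∫ ρ in Set.Ioo (-1 : ℝ) 1, (Real.sqrt (1 - ρ ^ 2))⁻¹
        * rexp (-(x₁ ^ 2 + x₂ ^ 2 - 2 * ρ * x₁ * x₂) / (2 * (1 - ρ ^ 2))))
      = Real.sqrt (2 * π) * ∫ v in Ioi (max |x₁| |x₂|), rexp (-v ^ 2 / 2) := by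
    rw [MeasureTheory.integral_eq_lintegral_of_nonneg_ae hnn hmeas]
    rw [main_chain x₁ x₂]
    exact ENNReal.toReal_ofReal (mul_nonneg (Real.sqrt_nonneg _) hInn)
  rw [step0, main, cdf_fact (max |x₁| |x₂|)]
  have h2π : Real.sqrt (2 * π) ^ 2 = 2 * π := Real.sq_sqrt (by positivity)
  have hs : (0:ℝ) < Real.sqrt (2 * π) := Real.sqrt_pos.mpr (by positivity)
  have hπ : (0:ℝ) < π := Real.pi_pos
  set s := Real.sqrt (2 * π)
  set I := ∫ v in Ioi (max |x₁| |x₂|), rexp (-v ^ 2 / 2)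
  field_simp
  linear_combination 2 * I * h2π
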